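/- arXiv:2501.14219 — 3 statements merged into one kernel-verified Lean document; each statement's English description precedes it below -/
import Mathlib

section
/- In the bullet process, the survival probability function θ(v) — the probability that a bullet fired first with fixed velocity v survives forever against the i.i.d. sequence of subsequent bullets — is non-decreasing in v. -/
open MeasureTheory ProbabilityTheory Filter Set

noncomputable section

namespace BulletProcess

/-- Firing time of bullet `i`: `t_i = Δ_1 + ⋯ + Δ_i` (the delay `Δ_0` plays no role). -/
def fireTime (Δ : ℕ → ℝ) (i : ℕ) : ℝ := ∑ j ∈ Finset.Icc 1 i, Δ j

/-- Virtual position of bullet `i` at time `t`. -/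
def pos (v Δ : ℕ → ℝ) (i : ℕ) (t : ℝ) : ℝ := v i * (t - fireTime Δ i)

/-- No three bullets are ever simultaneously at the same position. -/
def NoTriple (v Δ : ℕ → ℝ) : Prop :=
  ∀ t : ℝ, ∀ i j k : ℕ, i ≠ j → j ≠ k → i ≠ k →
    fireTime Δ i ≤ t → fireTime Δ j ≤ t → fireTime Δ k ≤ t →
    ¬(pos v Δ i t = pos v Δ j t ∧ pos v Δ j t = pos v Δ k t)

/-- A consistent annihilation structure for the bullet process on the bullets indexed by `I`:
`partner i = some j` means bullets `i` and `j` mutually annihilate (at time `deathTime i`),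
`partner i = none` means bullet `i` survives forever.  The axioms say that matched pairs
really collide (the later bullet is faster and catches the earlier one at their common death
time), and that two bullets that are both fired and still alive never occupy the same
position. -/
structure Dynamics (v Δ : ℕ → ℝ) (I : Set ℕ) where
  partner : ℕ → Option ℕ
  deathTime : ℕ → ℝ
  partner_mem : ∀ i j, i ∈ I → partner i = some j → j ∈ I
  partner_symm : ∀ i j, i ∈ I → j ∈ I → (partner i = some j ↔ partner j = some i)
  partner_ne : ∀ i, i ∈ I → partner i ≠ some i
  death_symm : ∀ i j, i ∈ I → partner i = some j → deathTime j = deathTime i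
  collide : ∀ i j, i ∈ I → i < j → partner i = some j →
    v i < v j ∧ fireTime Δ j ≤ deathTime i ∧
      pos v Δ i (deathTime i) = pos v Δ j (deathTime i)
  no_crossing : ∀ i j, i ∈ I → j ∈ I → i ≠ j → ∀ t : ℝ,
    fireTime Δ i ≤ t → fireTime Δ j ≤ t →
    (partner i = none ∨ t < deathTime i) →
    (partner j = none ∨ t < deathTime j) →
    pos v Δ i t ≠ pos v Δ j t

namespace Dynamics

variable {v Δ : ℕ → ℝ} {I : Set ℕ}

/-- Bullet `i` survives (is never annihilated). -/
def survives (d : Dynamics v Δ I) (i : ℕ) : Prop := d.partner i = none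

/-- The set of surviving bullets. -/
def surv (d : Dynamics v Δ I) : Set ℕ := {i | i ∈ I ∧ d.survives i}

/-- `d.annihilates j i` : the later bullet `j` catches up to and annihilates `i`. -/
def annihilates (d : Dynamics v Δ I) (j i : ℕ) : Prop := i < j ∧ d.partner i = some j

end Dynamics

/-- The probabilistic bullet process on the probability space `(Ω, P)`: i.i.d. velocities with
law `μ` and i.i.d. delays with law `ν` (all independent, and all strictly positive), together
with a choice of dynamics for every admissible deterministic configuration and every index set
of bullets. -/
structure Setup (Ω : Type) [MeasurableSpace Ω] (P : Measure Ω) (μ ν : Measure ℝ) where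
  V : ℕ → Ω → ℝ
  D : ℕ → Ω → ℝ
  Vpos : ∀ i ω, 0 < V i ω
  Dpos : ∀ i ω, 0 < D i ω
  measV : ∀ i, Measurable (V i)
  measD : ∀ i, Measurable (D i)
  lawV : ∀ i, P.map (V i) = μ
  lawD : ∀ i, P.map (D i) = ν
  indep : iIndepFun (Sum.elim V D) P
  dyn : ∀ (v Δ : ℕ → ℝ), 0 ≤ v 0 → (∀ i, i ≠ 0 → 0 < v i) → (∀ i, 0 < Δ i) →
    ∀ (I : Set ℕ), Dynamics v Δ I

namespace Setup

variable {Ω : Type} [MeasurableSpace Ω] {P : Measure Ω} {μ ν : Measure ℝ}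
variable (B : Setup Ω P μ ν)

/-- The realized sequence of velocities. -/
def vseq (ω : Ω) : ℕ → ℝ := fun i => B.V i ω

/-- The realized sequence of delays. -/
def dseq (ω : Ω) : ℕ → ℝ := fun i => B.D i ω

/-- Validity of the pair `(μ, ν)`: almost surely there are no triple collisions. -/
def valid : Prop := ∀ᵐ ω ∂P, NoTriple (B.vseq ω) (B.dseq ω)

/-- The dynamics of the bullet process on the bullets indexed by `I`. -/
def dynOn (ω : Ω) (I : Set ℕ) : Dynamics (B.vseq ω) (B.dseq ω) I :=
  B.dyn _ _ (le_of_lt (B.Vpos 0 ω)) (fun i _ => B.Vpos i ω) (fun i => B.Dpos i ω) I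

/-- `S`, the survivor set of the full process. -/
def survSet (ω : Ω) : Set ℕ := (B.dynOn ω Set.univ).surv

/-- `S_n`, the survivor set of the truncated process on bullets `b_0, …, b_n`. -/
def truncS (ω : Ω) (n : ℕ) : Set ℕ := (B.dynOn ω (Set.Iic n)).surv

/-- `b_n` is a potential survivor: it survives in the process on `b_0, …, b_n`. -/
def potSurv (ω : Ω) (n : ℕ) : Prop := (B.dynOn ω (Set.Iic n)).survives n

/-- The dynamics when the velocity of `b_0` is fixed to `v` (junk value `max v 0` if `v < 0`). -/
def dyn0 (vel : ℝ) (ω : Ω) (I : Set ℕ) :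
    Dynamics (Function.update (B.vseq ω) 0 (max vel 0)) (B.dseq ω) I :=
  B.dyn _ _ (by simp) (fun i hi => by
      rw [Function.update_of_ne hi]; exact B.Vpos i ω)
    (fun i => B.Dpos i ω) I

/-- The event that the first bullet, with velocity fixed to `v`, survives forever. -/
def survEvent (vel : ℝ) : Set Ω := {ω | (B.dyn0 vel ω Set.univ).survives 0}

/-- `θ(v)`: the probability that the first bullet survives when its velocity is fixed to `v`. -/
def theta (vel : ℝ) : ℝ := (P (B.survEvent vel)).toReal

/-- The critical velocity `v_c = inf {v ≥ 0 : θ(v) > 0}` (equal to `⊤` if no speed is fast). -/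
def vc : EReal :=
  sInf {x : EReal | ∃ vel : ℝ, 0 ≤ vel ∧ 0 < B.theta vel ∧ x = (vel : EReal)}

end Setup

end BulletProcess

namespace BulletProcess

section Aux

variable {w Δ : ℕ → ℝ}

lemma fireTime_zero (Δ : ℕ → ℝ) : fireTime Δ 0 = 0 := by simp [fireTime]

lemma fireTime_mono (hΔ : ∀ i, 0 < Δ i) : Monotone (fireTime Δ) := by
  intro i j hij
  exact Finset.sum_le_sum_of_subset_of_nonneg (Finset.Icc_subset_Icc_right hij)
    (fun k _ _ => (hΔ k).le)

lemma fireTime_pos (hΔ : ∀ i, 0 < Δ i) {j : ℕ} (hj : j ≠ 0) : 0 < fireTime Δ j := by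
  apply Finset.sum_pos (fun k _ => hΔ k)
  exact Finset.nonempty_Icc.2 (Nat.one_le_iff_ne_zero.2 hj)

lemma pos_update_ne {c : ℝ} {i : ℕ} (hi : i ≠ 0) (t : ℝ) :
    pos (Function.update w 0 c) Δ i t = pos w Δ i t := by
  simp [pos, Function.update_of_ne hi]

lemma pos_update_zero (c : ℝ) (t : ℝ) :
    pos (Function.update w 0 c) Δ 0 t = c * t := by
  simp [pos, fireTime_zero]

/-- Basic facts about a matched pair. -/
lemma Dynamics.pair_facts {v : ℕ → ℝ} (d : Dynamics v Δ Set.univ) (hΔ : ∀ i, 0 < Δ i)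
    {i j : ℕ} (h : d.partner i = some j) :
    d.deathTime j = d.deathTime i ∧
    pos v Δ i (d.deathTime i) = pos v Δ j (d.deathTime i) ∧
    fireTime Δ i ≤ d.deathTime i ∧ fireTime Δ j ≤ d.deathTime i := by
  have hji : j ≠ i := by
    intro e; exact d.partner_ne i trivial (e ▸ h)
  have hds : d.deathTime j = d.deathTime i := d.death_symm i j trivial h
  rcases lt_or_gt_of_ne hji with hlt | hlt
  · -- j < i
    have h' : d.partner j = some i := (d.partner_symm i j trivial trivial).1 h
    obtain ⟨_, hfi, hpos⟩ := d.collide j i trivial hlt h'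
    rw [hds] at hfi hpos
    exact ⟨hds, hpos.symm, hfi, le_trans (fireTime_mono hΔ hlt.le) hfi⟩
  · -- i < j
    obtain ⟨_, hfj, hpos⟩ := d.collide i j trivial hlt h
    exact ⟨hds, hpos, le_trans (fireTime_mono hΔ hlt.le) hfj, hfj⟩

/-- The inductive step of the alternating-path argument. -/
lemma step {cX cY : ℝ} (X : Dynamics (Function.update w 0 cX) Δ Set.univ)
    (Y : Dynamics (Function.update w 0 cY) Δ Set.univ)
    (hΔ : ∀ i, 0 < Δ i) (hNT : NoTriple w Δ) (T₀ : ℝ)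
    (hYT : ∀ b, Y.partner 0 = some b → Y.deathTime b = T₀)
    {a b : ℕ} {U V : ℝ} (ha : a ≠ 0) (hb : b ≠ 0)
    (hXab : X.partner a = some b) (hXa : X.deathTime a = V)
    (hYa : Y.deathTime a = U) (hVU : V < U) (hUT : U ≤ T₀) :
    ∃ c W, c ≠ 0 ∧ Y.partner b = some c ∧ Y.deathTime b = W ∧
      X.deathTime b = V ∧ W < V ∧ V ≤ T₀ := by
  have hab : a ≠ b := by
    intro e; exact X.partner_ne a trivial (by rw [hXab, e])
  obtain ⟨hdsX, hposX, hfa, hfb⟩ := X.pair_facts hΔ hXab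
  rw [hXa] at hposX hfa hfb hdsX
  -- positions in the base configuration
  have pw : pos w Δ a V = pos w Δ b V := by
    rwa [pos_update_ne ha, pos_update_ne hb] at hposX
  have haliveYa : Y.partner a = none ∨ V < Y.deathTime a := Or.inr (by rw [hYa]; exact hVU)
  have hposY : pos (Function.update w 0 cY) Δ a V = pos (Function.update w 0 cY) Δ b V := by
    rw [pos_update_ne ha, pos_update_ne hb]; exact pw
  rcases hc : Y.partner b with _ | c
  · exact absurd hposY
      (Y.no_crossing a b trivial trivial hab V hfa hfb haliveYa (Or.inl hc))
  · have hWle : Y.deathTime b ≤ V := by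
      by_contra hlt
      exact Y.no_crossing a b trivial trivial hab V hfa hfb haliveYa
        (Or.inr (lt_of_not_ge hlt)) hposY
    obtain ⟨hdsY, hposYbc, hfb', hfc⟩ := Y.pair_facts hΔ hc
    have hbc : b ≠ c := by
      intro e; exact Y.partner_ne b trivial (by rw [hc, e])
    have hac : a ≠ c := by
      intro e; subst e
      have hsym : Y.deathTime a = Y.deathTime b := Y.death_symm b a trivial hc
      rw [hYa] at hsym
      linarith
    have hc0 : c ≠ 0 := by
      intro e; subst e
      have h0b : Y.partner 0 = some b := (Y.partner_symm b 0 trivial trivial).1 hc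
      have hTb := hYT b h0b
      linarith
    have hWV : Y.deathTime b < V := by
      rcases lt_or_eq_of_le hWle with h | h
      · exact h
      · exfalso
        have pw2 : pos w Δ b (Y.deathTime b) = pos w Δ c (Y.deathTime b) := by
          rwa [pos_update_ne hb, pos_update_ne hc0] at hposYbc
        rw [h] at pw2 hfc
        exact hNT V a b c hab hbc hac hfa hfb hfc ⟨pw, pw2⟩
    exact ⟨c, Y.deathTime b, hc0, rfl, rfl, hdsX, hWV, le_of_lt (lt_of_lt_of_le hVU hUT)⟩

/-- The base step: if the faster bullet `0` is caught by `j`, then in the slow process `j`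
dies strictly before that time. -/
lemma base {c₁ c₂ : ℝ} (h0 : 0 ≤ c₁) (h12 : c₁ < c₂)
    (d₁ : Dynamics (Function.update w 0 c₁) Δ Set.univ)
    (d₂ : Dynamics (Function.update w 0 c₂) Δ Set.univ)
    (hΔ : ∀ i, 0 < Δ i) (h1 : d₁.partner 0 = none) {j : ℕ} (h2 : d₂.partner 0 = some j) :
    ∃ k, j ≠ 0 ∧ k ≠ 0 ∧ d₁.partner j = some k ∧ d₁.deathTime j < d₂.deathTime 0 := by
  have hj : j ≠ 0 := by
    intro e; exact d₂.partner_ne 0 trivial (e ▸ h2)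
  set T₀ := d₂.deathTime 0 with hT₀
  obtain ⟨hds, hpos, hf0, hfj⟩ := d₂.pair_facts hΔ h2
  have hjlt : 0 < j := Nat.pos_of_ne_zero hj
  obtain ⟨hv, _, _⟩ := d₂.collide 0 j trivial hjlt h2
  rw [Function.update_self, Function.update_of_ne hj] at hv
  -- velocities
  set r := w j with hr
  have hrc : c₁ < r := lt_trans h12 hv
  have hrpos : 0 < r - c₁ := by linarith
  set tj := fireTime Δ j with htj
  have htjpos : 0 < tj := fireTime_pos hΔ hj
  have hT0pos : 0 < T₀ := lt_of_lt_of_le htjpos hfj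
  -- position equality at T₀ : c₂ * T₀ = r * (T₀ - tj)
  have hpe : c₂ * T₀ = r * (T₀ - tj) := by
    have := hpos
    rw [pos_update_zero, pos_update_ne hj] at this
    simpa [pos, fireTime_zero] using this
  set t' := r * tj / (r - c₁) with ht'
  have hkey : (r - c₁) * t' = r * tj := by
    rw [ht']; field_simp [hrpos.ne']
  have ht'tj : tj ≤ t' := by
    rw [ht', le_div_iff₀ hrpos]
    nlinarith
  have ht'pos : 0 < t' := lt_of_lt_of_le htjpos ht'tj
  have ht'T : t' < T₀ := by
    have h2' : (r - c₁) * T₀ = r * tj + (c₂ - c₁) * T₀ := by ring_nf; nlinarith [hpe]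
    have : (r - c₁) * t' < (r - c₁) * T₀ := by
      rw [hkey, h2']
      nlinarith
    exact lt_of_mul_lt_mul_left this hrpos.le
  -- bullet j crosses the line of bullet 0 at time t'
  have hposeq : pos (Function.update w 0 c₁) Δ 0 t' = pos (Function.update w 0 c₁) Δ j t' := by
    rw [pos_update_zero, pos_update_ne hj, pos]
    rw [← htj, ← hr]
    nlinarith [hkey]
  rcases hk : d₁.partner j with _ | k
  · exact absurd hposeq
      (d₁.no_crossing 0 j trivial trivial (Ne.symm hj) t'
        (by rw [fireTime_zero]; exact ht'pos.le) ht'tj (Or.inl h1) (Or.inl hk))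
  · have hdj : d₁.deathTime j ≤ t' := by
      by_contra hlt
      exact d₁.no_crossing 0 j trivial trivial (Ne.symm hj) t'
        (by rw [fireTime_zero]; exact ht'pos.le) ht'tj (Or.inl h1)
        (Or.inr (lt_of_not_ge hlt)) hposeq
    have hk0 : k ≠ 0 := by
      intro e; subst e
      have h0j : d₁.partner 0 = some j := (d₁.partner_symm j 0 trivial trivial).1 hk
      rw [h1] at h0j
      exact absurd h0j (by simp)
    exact ⟨k, hj, hk0, rfl, lt_of_le_of_lt hdj ht'T⟩

/-- The deterministic monotonicity lemma: in a configuration with no triple collisions and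
diverging firing times, if bullet `0` survives with speed `c₁` then it survives with any
faster speed `c₂`. -/
lemma det_mono {c₁ c₂ : ℝ} (h0 : 0 ≤ c₁) (h12 : c₁ < c₂)
    (hΔ : ∀ i, 0 < Δ i) (hNT : NoTriple w Δ)
    (hdiv : Tendsto (fireTime Δ) atTop atTop)
    (d₁ : Dynamics (Function.update w 0 c₁) Δ Set.univ)
    (d₂ : Dynamics (Function.update w 0 c₂) Δ Set.univ)
    (h1 : d₁.partner 0 = none) : d₂.partner 0 = none := by
  by_contra h2'
  obtain ⟨j, h2⟩ := Option.ne_none_iff_exists'.1 h2'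
  obtain ⟨k, hj0, hk0, hjk, hS₁⟩ := base h0 h12 d₁ d₂ hΔ h1 h2
  set T₀ := d₂.deathTime 0 with hT₀
  have hT2 : ∀ b, d₂.partner 0 = some b → d₂.deathTime b = T₀ :=
    fun b hb => d₂.death_symm 0 b trivial hb
  have hT1 : ∀ b, d₁.partner 0 = some b → d₁.deathTime b = T₀ := by
    intro b hb; rw [h1] at hb; exact absurd hb (by simp)
  -- invariant: (a, b, U, V)
  let Good : ℕ × ℕ × ℝ × ℝ → Prop := fun q =>
    q.1 ≠ 0 ∧ q.2.1 ≠ 0 ∧ d₁.partner q.1 = some q.2.1 ∧ d₁.deathTime q.1 = q.2.2.2 ∧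
      d₂.deathTime q.1 = q.2.2.1 ∧ q.2.2.2 < q.2.2.1 ∧ q.2.2.1 ≤ T₀
  have hdstep : ∀ q, Good q → ∃ q', Good q' ∧ q'.2.2.2 < q.2.2.2 := by
    rintro ⟨a, b, U, V⟩ ⟨ha, hb, hab, hVa, hUa, hVU, hUT⟩
    obtain ⟨c, W, hc0, hbc, hWb, hVb, hWV, hVT⟩ :=
      step d₁ d₂ hΔ hNT T₀ hT2 ha hb hab hVa hUa hVU hUT
    obtain ⟨e, R, he0, hce, hRc, hWc, hRW, hWT⟩ :=
      step d₂ d₁ hΔ hNT T₀ hT1 hb hc0 hbc hWb hVb hWV hVT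
    exact ⟨(c, e, W, R), ⟨hc0, he0, hce, hRc, hWc, hRW, hWT⟩, lt_trans hRW hWV⟩
  have hgood₀ : Good (j, k, T₀, d₁.deathTime j) :=
    ⟨hj0, hk0, hjk, rfl, d₂.death_symm 0 j trivial h2, hS₁, le_refl _⟩
  -- build the infinite descending sequence
  let Q := {q : ℕ × ℕ × ℝ × ℝ // Good q}
  have hstep' : ∀ q : Q, ∃ q' : Q, q'.1.2.2.2 < q.1.2.2.2 := by
    rintro ⟨q, hq⟩
    obtain ⟨q', hq', hlt⟩ := hdstep q hq
    exact ⟨⟨q', hq'⟩, hlt⟩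
  choose f hf using hstep'
  let F : ℕ → Q := fun m => f^[m] ⟨(j, k, T₀, d₁.deathTime j), hgood₀⟩
  have hFsucc : ∀ m, F (m + 1) = f (F m) := fun m => Function.iterate_succ_apply' f m _
  have hdec : StrictAnti (fun m => (F m).1.2.2.2) := by
    apply strictAnti_nat_of_succ_lt
    intro m
    rw [hFsucc m]
    exact hf (F m)
  have hinj : Function.Injective (fun m => (F m).1.1) := by
    intro m n h
    simp only at h
    apply hdec.injective
    show (F m).1.2.2.2 = (F n).1.2.2.2
    rw [← (F m).2.2.2.2.1, ← (F n).2.2.2.2.1, h]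
  have hfire : ∀ m, fireTime Δ (F m).1.1 ≤ T₀ := by
    intro m
    obtain ⟨ha, hb, hab, hVa, hUa, hVU, hUT⟩ := (F m).2
    have := (d₁.pair_facts hΔ hab).2.2.1
    rw [hVa] at this
    exact this.trans (le_of_lt (lt_of_lt_of_le hVU hUT))
  obtain ⟨K, hK⟩ := (hdiv.eventually_gt_atTop T₀).exists_forall_of_atTop
  have hlt : ∀ m, (F m).1.1 < K := by
    intro m
    by_contra hge
    exact absurd (hfire m) (not_le.2 (hK _ (le_of_not_gt hge)))
  obtain ⟨m, n, hmn, he⟩ :=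
    Finite.exists_ne_map_eq_of_infinite (fun m => (⟨(F m).1.1, hlt m⟩ : Fin K))
  exact hmn (hinj (by simpa using he))

end Aux


variable {Ω : Type} [MeasurableSpace Ω] {P : MeasureTheory.Measure Ω}
  [MeasureTheory.IsProbabilityMeasure P] {μ ν : MeasureTheory.Measure ℝ}
  [MeasureTheory.IsProbabilityMeasure μ] [MeasureTheory.IsProbabilityMeasure ν]


open Topology in
/-- Almost surely the firing times diverge. -/
lemma fire_diverge (B : Setup Ω P μ ν) :
    ∀ᵐ ω ∂P, Tendsto (fireTime (B.dseq ω)) atTop atTop := by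
  classical
  have hIoi : ν (Set.Ioi (0:ℝ)) = 1 := by
    rw [← B.lawD 0, Measure.map_apply (B.measD 0) measurableSet_Ioi]
    have h : (B.D 0) ⁻¹' Set.Ioi 0 = Set.univ := by
      ext ω; simp [(B.Dpos 0 ω)]
    rw [h, measure_univ]
  obtain ⟨ε, hε, hq⟩ : ∃ ε : ℝ, 0 < ε ∧ ν (Set.Iic ε) < 1 := by
    have hU : (⋃ n : ℕ, Set.Ioi (((n:ℝ)+1)⁻¹)) = Set.Ioi 0 := by
      ext x
      simp only [Set.mem_iUnion, Set.mem_Ioi]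
      constructor
      · rintro ⟨n, hn⟩
        exact lt_trans (by positivity) hn
      · intro hx
        obtain ⟨n, hn⟩ := exists_nat_gt x⁻¹
        exact ⟨n, inv_lt_of_inv_lt₀ hx (hn.trans (lt_add_one _))⟩
    have hne : ∃ n : ℕ, ν (Set.Ioi (((n:ℝ)+1)⁻¹)) ≠ 0 := by
      by_contra hcon
      push_neg at hcon
      have h0 := measure_iUnion_null hcon
      rw [hU, hIoi] at h0
      exact one_ne_zero h0
    obtain ⟨n, hn⟩ := hne
    refine ⟨((n:ℝ)+1)⁻¹, by positivity, ?_⟩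
    have hcompl : Set.Iic (((n:ℝ)+1)⁻¹) = (Set.Ioi (((n:ℝ)+1)⁻¹))ᶜ := Set.compl_Ioi.symm
    rw [hcompl, measure_compl measurableSet_Ioi (measure_ne_top ν _), measure_univ]
    exact ENNReal.sub_lt_self ENNReal.one_ne_top one_ne_zero hn
  have hq' : ∀ i : ℕ, P (B.D i ⁻¹' Set.Iic ε) = ν (Set.Iic ε) := by
    intro i
    rw [← Measure.map_apply (B.measD i) measurableSet_Iic, B.lawD i]
  have hprod : ∀ N m : ℕ, P (⋂ i ∈ Finset.Icc N (N + m), B.D i ⁻¹' Set.Iic ε)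
      = ν (Set.Iic ε) ^ (m + 1) := by
    intro N m
    have hind := B.indep.measure_inter_preimage_eq_mul
      ((Finset.Icc N (N + m)).map ⟨Sum.inr, Sum.inr_injective⟩)
      (sets := fun _ => Set.Iic ε) (fun i _ => measurableSet_Iic)
    rw [Finset.prod_map] at hind
    have h1 : (⋂ i ∈ (Finset.Icc N (N+m)).map ⟨Sum.inr, Sum.inr_injective⟩,
        Sum.elim B.V B.D i ⁻¹' Set.Iic ε) = ⋂ i ∈ Finset.Icc N (N+m), B.D i ⁻¹' Set.Iic ε := by
      ext ω
      simp
    rw [h1] at hind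
    rw [hind]
    have h2 : ∀ i ∈ Finset.Icc N (N+m),
        P (Sum.elim B.V B.D ((⟨Sum.inr, Sum.inr_injective⟩ : ℕ ↪ ℕ ⊕ ℕ) i) ⁻¹' Set.Iic ε)
          = ν (Set.Iic ε) := by
      intro i _
      simpa using hq' i
    rw [Finset.prod_congr rfl h2, Finset.prod_const, Nat.card_Icc]
    congr 1
    omega
  have hA : ∀ N : ℕ, P {ω | ∀ i, N ≤ i → B.D i ω ≤ ε} = 0 := by
    intro N
    have hb : ∀ m : ℕ, P {ω | ∀ i, N ≤ i → B.D i ω ≤ ε} ≤ ν (Set.Iic ε) ^ (m+1) := by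
      intro m
      rw [← hprod N m]
      apply measure_mono
      intro ω hω
      simp only [Set.mem_iInter, Set.mem_preimage, Set.mem_Iic]
      intro i hi
      exact hω i (Finset.mem_Icc.1 hi).1
    have h0 : Tendsto (fun m : ℕ => ν (Set.Iic ε) ^ (m+1)) atTop (𝓝 0) :=
      (ENNReal.tendsto_pow_atTop_nhds_zero_of_lt_one hq).comp (tendsto_add_atTop_nat 1)
    exact le_zero_iff.1 (ge_of_tendsto' h0 hb)
  have hsub : {ω | ¬ Tendsto (fireTime (B.dseq ω)) atTop atTop}
      ⊆ ⋃ N : ℕ, {ω | ∀ i, N ≤ i → B.D i ω ≤ ε} := by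
    intro ω hω
    by_contra hmem
    apply hω
    have hinf : ∀ N, ∃ i, N ≤ i ∧ ε < B.D i ω := by
      intro N
      by_contra hcon
      push_neg at hcon
      exact hmem (Set.mem_iUnion.2 ⟨N, fun i hi => hcon i hi⟩)
    apply tendsto_atTop_atTop_of_monotone (fireTime_mono (fun i => B.Dpos i ω))
    intro C
    have hstep : ∀ n : ℕ, ∃ K, (n:ℝ) * ε ≤ fireTime (B.dseq ω) K := by
      intro n
      induction n with
      | zero => exact ⟨0, by simp [fireTime_zero]⟩
      | succ n ih =>
        obtain ⟨K, hK⟩ := ih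
        obtain ⟨i, hi, hDi⟩ := hinf (K+1)
        refine ⟨i, ?_⟩
        have hsubK : insert i (Finset.Icc 1 K) ⊆ Finset.Icc 1 i := by
          intro x hx
          rcases Finset.mem_insert.1 hx with rfl | hx
          · exact Finset.mem_Icc.2 ⟨by omega, le_refl _⟩
          · have hx' := Finset.mem_Icc.1 hx
            exact Finset.mem_Icc.2 ⟨hx'.1, by omega⟩
        have hnotmem : i ∉ Finset.Icc 1 K := by
          intro hx
          have := (Finset.mem_Icc.1 hx).2
          omega
        have h1 : (∑ j ∈ insert i (Finset.Icc 1 K), B.dseq ω j) ≤ fireTime (B.dseq ω) i :=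
          Finset.sum_le_sum_of_subset_of_nonneg hsubK (fun k _ _ => (B.Dpos k ω).le)
        rw [Finset.sum_insert hnotmem] at h1
        have h2 : B.dseq ω i = B.D i ω := rfl
        have h3 : (∑ j ∈ Finset.Icc 1 K, B.dseq ω j) = fireTime (B.dseq ω) K := rfl
        rw [h2, h3] at h1
        push_cast
        nlinarith
    obtain ⟨n, hn⟩ := exists_nat_ge (C / ε)
    obtain ⟨K, hK⟩ := hstep n
    refine ⟨K, le_trans ?_ hK⟩
    rw [div_le_iff₀ hε] at hn
    linarith
  exact ae_iff.2 (measure_mono_null hsub (measure_iUnion_null hA))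

/-- The survival probability `θ(v)` is non-decreasing in `v` on `[0, ∞)`. -/
theorem theta_monotone (B : Setup Ω P μ ν) (hvalid : B.valid) :
    MonotoneOn B.theta (Set.Ici 0) := by
  intro a ha b hb hab
  rcases eq_or_lt_of_le hab with rfl | hlt
  · exact le_refl _
  have hae : ∀ᵐ ω ∂P, NoTriple (B.vseq ω) (B.dseq ω) ∧
      Tendsto (fireTime (B.dseq ω)) atTop atTop := hvalid.and (fire_diverge B)
  have hnull : P {ω | ¬(NoTriple (B.vseq ω) (B.dseq ω) ∧
      Tendsto (fireTime (B.dseq ω)) atTop atTop)} = 0 := ae_iff.1 hae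
  have hsub : B.survEvent a ⊆ B.survEvent b ∪ {ω | ¬(NoTriple (B.vseq ω) (B.dseq ω) ∧
      Tendsto (fireTime (B.dseq ω)) atTop atTop)} := by
    intro ω hω
    by_cases hg : NoTriple (B.vseq ω) (B.dseq ω) ∧ Tendsto (fireTime (B.dseq ω)) atTop atTop
    · left
      have hmaxa : max a 0 = a := max_eq_left ha
      have hmaxb : max b 0 = b := max_eq_left hb
      exact det_mono (le_max_right a 0) (by rw [hmaxa, hmaxb]; exact hlt)
        (fun i => B.Dpos i ω) hg.1 hg.2 (B.dyn0 a ω Set.univ) (B.dyn0 b ω Set.univ) hω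
    · right
      exact hg
  have hle : P (B.survEvent a) ≤ P (B.survEvent b) := by
    calc P (B.survEvent a) ≤ P (B.survEvent b ∪ _) := measure_mono hsub
    _ ≤ P (B.survEvent b) + P _ := measure_union_le _ _
    _ = P (B.survEvent b) := by rw [hnull, add_zero]
  exact ENNReal.toReal_mono (measure_ne_top P _) hle

end BulletProcess
end
end

section
/- In the bullet process, the sequence of velocities of the surviving bullets, listed in order of increasing firing index, is non-increasing. -/
open MeasureTheory ProbabilityTheory Filter Set

noncomputable section

namespace BulletProcess

variable {Ω : Type} [MeasurableSpace Ω] {P : MeasureTheory.Measure Ω}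
  [MeasureTheory.IsProbabilityMeasure P] {μ ν : MeasureTheory.Measure ℝ}
  [MeasureTheory.IsProbabilityMeasure μ] [MeasureTheory.IsProbabilityMeasure ν]

/-- The velocities of the surviving bullets, in order of increasing firing index, are
non-increasing. -/
theorem survivor_velocities_antitone (v Δ : ℕ → ℝ) (hv : ∀ i, 0 < v i) (hΔ : ∀ i, 0 < Δ i)
    (htriple : NoTriple v Δ) (d : Dynamics v Δ Set.univ)
    (i j : ℕ) (hij : i < j) (hi : i ∈ d.surv) (hj : j ∈ d.surv) : v j ≤ v i := by
  by_contra hlt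
  push_neg at hlt
  -- fireTime is monotone
  have hmono : fireTime Δ i ≤ fireTime Δ j := by
    apply Finset.sum_le_sum_of_subset_of_nonneg
    · exact Finset.Icc_subset_Icc le_rfl (le_of_lt hij)
    · intro k _ _; exact (hΔ k).le
  set ti := fireTime Δ i
  set tj := fireTime Δ j
  have hvij : 0 < v j - v i := sub_pos.mpr hlt
  set c : ℝ := v i * (tj - ti) / (v j - v i) with hc
  have hc0 : 0 ≤ c := by
    apply div_nonneg _ hvij.le
    exact mul_nonneg (hv i).le (sub_nonneg.mpr hmono)
  set t : ℝ := tj + c with ht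
  have hti : ti ≤ t := le_trans hmono (le_add_of_nonneg_right hc0)
  have htj : tj ≤ t := le_add_of_nonneg_right hc0
  have hcross : pos v Δ i t = pos v Δ j t := by
    simp only [pos, ht, hc]
    field_simp
    ring
  exact d.no_crossing i j (Set.mem_univ i) (Set.mem_univ j) hij.ne t hti htj
    (Or.inl hi.2) (Or.inl hj.2) hcross

end BulletProcess
end
end

section
/- In the bullet process, if the full survivor set S is finite, then almost surely S_n = S for infinitely many n, where S_n is the survivor set of the truncated process on bullets (b_0,…,b_n). Consequently liminf_n |S_n| ≤ |S| on the event that S is finite. -/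
open MeasureTheory ProbabilityTheory Filter Set

noncomputable section

namespace BulletProcess

variable {Ω : Type} [MeasurableSpace Ω] {P : MeasureTheory.Measure Ω}
  [MeasureTheory.IsProbabilityMeasure P] {μ ν : MeasureTheory.Measure ℝ}
  [MeasureTheory.IsProbabilityMeasure μ] [MeasureTheory.IsProbabilityMeasure ν]

-- AUX START
section Aux

variable {v Δ : ℕ → ℝ} {I : Set ℕ}

lemma fireTime_lt_fireTime (hΔ : ∀ i, 0 < Δ i) {i j : ℕ} (h : i < j) :
    fireTime Δ i < fireTime Δ j := by
  unfold fireTime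
  apply Finset.sum_lt_sum_of_subset (Finset.Icc_subset_Icc_right h.le)
    (i := j) (by simp [Nat.one_le_iff_ne_zero]; omega) (by simp; omega) (hΔ j)
  intro k _ _
  exact (hΔ k).le

lemma fireTime_le_fireTime (hΔ : ∀ i, 0 < Δ i) {i j : ℕ} (h : i ≤ j) :
    fireTime Δ i ≤ fireTime Δ j := by
  rcases h.lt_or_eq with h | h
  · exact (fireTime_lt_fireTime hΔ h).le
  · rw [h]

lemma pos_fireTime (i : ℕ) : pos v Δ i (fireTime Δ i) = 0 := by simp [pos]

lemma pos_pos (hv : ∀ i, 0 < v i) {i : ℕ} {t : ℝ} (h : fireTime Δ i < t) :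
    0 < pos v Δ i t := mul_pos (hv i) (by linarith)

namespace Dynamics

lemma pair (hΔ : ∀ i, 0 < Δ i) (d : Dynamics v Δ I) {a b : ℕ}
    (ha : a ∈ I) (hab : d.partner a = some b) :
    b ∈ I ∧ a ≠ b ∧ d.deathTime b = d.deathTime a ∧
    fireTime Δ a ≤ d.deathTime a ∧ fireTime Δ b ≤ d.deathTime a ∧
    pos v Δ a (d.deathTime a) = pos v Δ b (d.deathTime a) := by
  have hb : b ∈ I := d.partner_mem a b ha hab
  have hne : a ≠ b := fun h => d.partner_ne a ha (h ▸ hab)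
  have hdeath : d.deathTime b = d.deathTime a := d.death_symm a b ha hab
  rcases hne.lt_or_gt with h | h
  · obtain ⟨-, hf, hp⟩ := d.collide a b ha h hab
    exact ⟨hb, hne, hdeath, (fireTime_le_fireTime hΔ h.le).trans hf, hf, hp⟩
  · have hba : d.partner b = some a := (d.partner_symm a b ha hb).mp hab
    obtain ⟨-, hf, hp⟩ := d.collide b a hb h hba
    rw [hdeath] at hf hp
    exact ⟨hb, hne, hdeath, hf, (fireTime_le_fireTime hΔ h.le).trans hf, hp.symm⟩

lemma ahead (d : Dynamics v Δ I) {a b : ℕ} (ha : a ∈ I) (hb : b ∈ I) (hne : a ≠ b)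
    {t0 t1 : ℝ} (ht : t0 ≤ t1) (hfa : fireTime Δ a ≤ t0) (hfb : fireTime Δ b ≤ t0)
    (hA : d.partner a = none ∨ t1 ≤ d.deathTime a)
    (hB : d.partner b = none ∨ t1 ≤ d.deathTime b)
    (h0 : pos v Δ b t0 < pos v Δ a t0) : pos v Δ b t1 ≤ pos v Δ a t1 := by
  by_contra hlt
  push_neg at hlt
  have hcont : ContinuousOn (fun t => pos v Δ a t - pos v Δ b t) (Icc t0 t1) := by
    apply Continuous.continuousOn
    unfold pos
    continuity
  obtain ⟨t, htmem, htz⟩ := intermediate_value_Icc' ht hcont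
    (show (0:ℝ) ∈ Icc (pos v Δ a t1 - pos v Δ b t1) (pos v Δ a t0 - pos v Δ b t0) from
      ⟨by linarith, by linarith⟩)
  have htne : t ≠ t1 := by
    intro h
    rw [h] at htz
    simp only at htz
    linarith
  have htlt : t < t1 := lt_of_le_of_ne htmem.2 htne
  refine d.no_crossing a b ha hb hne t (hfa.trans htmem.1) (hfb.trans htmem.1)
    ?_ ?_ (by simp only at htz; linarith)
  · rcases hA with h | h
    · exact Or.inl h
    · exact Or.inr (lt_of_lt_of_le htlt h)
  · rcases hB with h | h
    · exact Or.inl h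
    · exact Or.inr (lt_of_lt_of_le htlt h)

lemma no_cross (hv : ∀ i, 0 < v i) (hΔ : ∀ i, 0 < Δ i) (hnt : NoTriple v Δ)
    (d : Dynamics v Δ I) {a c b e : ℕ} (ha : a ∈ I) (hc : c ∈ I)
    (h1 : a < c) (h2 : c < b) (h3 : b < e)
    (hab : d.partner a = some b) (hce : d.partner c = some e) : False := by
  obtain ⟨hbI, -, hdb, hfa1, hfb1, hpos1⟩ := d.pair hΔ ha hab
  obtain ⟨heI, -, hde, hfc2, hfe2, hpos2⟩ := d.pair hΔ hc hce
  set t1 := d.deathTime a with ht1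
  set t2 := d.deathTime c with ht2
  have hfac : fireTime Δ a < fireTime Δ c := fireTime_lt_fireTime hΔ h1
  have hfcb : fireTime Δ c < fireTime Δ b := fireTime_lt_fireTime hΔ h2
  have hfbe : fireTime Δ b < fireTime Δ e := fireTime_lt_fireTime hΔ h3
  rcases le_or_gt t1 t2 with h12 | h12
  · -- t1 ≤ t2, triple a c b at t1
    have hfc1 : fireTime Δ c ≤ t1 := hfcb.le.trans hfb1
    have hca : pos v Δ c t1 ≤ pos v Δ a t1 := by
      refine d.ahead ha hc h1.ne hfc1 hfac.le le_rfl (Or.inr le_rfl)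
        (Or.inr h12) ?_
      rw [pos_fireTime]
      exact pos_pos hv hfac
    have hbc : pos v Δ b t1 ≤ pos v Δ c t1 := by
      refine d.ahead hc hbI h2.ne hfb1 hfcb.le le_rfl (Or.inr h12)
        (Or.inr (le_of_eq hdb.symm)) ?_
      rw [pos_fireTime]
      exact pos_pos hv hfcb
    refine hnt t1 a c b h1.ne h2.ne (h1.trans h2).ne hfa1 hfc1 hfb1 ⟨?_, ?_⟩
    · linarith
    · linarith
  · -- t2 < t1, triple c b e at t2
    have hfb2 : fireTime Δ b ≤ t2 := hfbe.le.trans hfe2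
    have hcb : pos v Δ b t2 ≤ pos v Δ c t2 := by
      refine d.ahead hc hbI h2.ne hfb2 hfcb.le le_rfl (Or.inr le_rfl)
        (Or.inr (by rw [hdb]; exact h12.le)) ?_
      rw [pos_fireTime]
      exact pos_pos hv hfcb
    have hbe : pos v Δ e t2 ≤ pos v Δ b t2 := by
      refine d.ahead hbI heI h3.ne hfe2 hfbe.le le_rfl
        (Or.inr (by rw [hdb]; exact h12.le)) (Or.inr (le_of_eq hde.symm)) ?_
      rw [pos_fireTime]
      exact pos_pos hv hfbe
    refine hnt t2 c b e h2.ne h3.ne (h2.trans h3).ne hfc2 hfb2 hfe2 ⟨?_, ?_⟩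
    · linarith
    · linarith

lemma key (hΔ : ∀ i, 0 < Δ i) (hnt : NoTriple v Δ)
    (d d' : Dynamics v Δ I) {a b : ℕ}
    (ha : a ∈ I) (hab : d.partner a = some b)
    (hne : d'.partner a ≠ some b)
    (hmin : ∀ x, x ∈ I → d.partner x ≠ d'.partner x →
      (∀ c, d.partner x = some c → d.deathTime a ≤ d.deathTime x) ∧
      (∀ c, d'.partner x = some c → d.deathTime a ≤ d'.deathTime x)) : False := by
  set t := d.deathTime a with hta
  obtain ⟨hbI, hane, hdb, hfa, hfb, hpos⟩ := d.pair hΔ ha hab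
  have hba : d.partner b = some a := (d.partner_symm a b ha hbI).mp hab
  have haA : d.partner a ≠ d'.partner a := by
    rw [hab]; exact fun h => hne h.symm
  have hbA : d.partner b ≠ d'.partner b := by
    rw [hba]
    intro h
    exact hne ((d'.partner_symm b a hbI ha).mp h.symm)
  have status : ∀ x, x ∈ I → d.partner x ≠ d'.partner x →
      (d'.partner x = none ∨ t < d'.deathTime x) ∨
      (∃ c, d'.partner x = some c ∧ d'.deathTime x = t) := by
    intro x hx hxA
    rcases h : d'.partner x with _ | c
    · exact Or.inl (Or.inl rfl)
    · rcases ((hmin x hx hxA).2 c h).lt_or_eq with h' | h'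
      · exact Or.inl (Or.inr h')
      · exact Or.inr ⟨c, rfl, h'.symm⟩
  rcases status a ha haA with hAs | ⟨c, hc, hct⟩
  · rcases status b hbI hbA with hBs | ⟨c, hc, hct⟩
    · exact d'.no_crossing a b ha hbI hane t hfa hfb hAs hBs hpos
    · -- b dies at time t in d', partner c
      have hcb : c ≠ b := fun h => d'.partner_ne b hbI (h ▸ hc)
      have hca : c ≠ a := by
        intro h
        subst h
        exact hne ((d'.partner_symm b c hbI ha).mp hc)
      obtain ⟨hcI, -, -, -, hfc, hposbc⟩ := d'.pair hΔ hbI hc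
      rw [hct] at hfc hposbc
      exact hnt t a b c hane (Ne.symm hcb) (Ne.symm hca) hfa hfb hfc ⟨hpos, hposbc⟩
  · -- a dies at time t in d', partner c
    have hcb : c ≠ b := fun h => hne (h ▸ hc)
    have hca : c ≠ a := fun h => d'.partner_ne a ha (h ▸ hc)
    obtain ⟨hcI, -, -, -, hfc, hposac⟩ := d'.pair hΔ ha hc
    rw [hct] at hfc hposac
    exact hnt t b a c (Ne.symm hane) (Ne.symm hca) (Ne.symm hcb) hfb hfa hfc
      ⟨hpos.symm, hposac⟩

lemma partner_eq_of_finite (hΔ : ∀ i, 0 < Δ i) (hnt : NoTriple v Δ)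
    (hI : I.Finite) (d d' : Dynamics v Δ I) {a : ℕ} (ha : a ∈ I) :
    d.partner a = d'.partner a := by
  by_contra hne0
  set A : Set ℕ := {x | x ∈ I ∧ d.partner x ≠ d'.partner x} with hA
  have hAfin : A.Finite := hI.subset fun x hx => hx.1
  set T : Set ℝ := {t | ∃ x ∈ A,
      (∃ c, d.partner x = some c ∧ d.deathTime x = t) ∨
      (∃ c, d'.partner x = some c ∧ d'.deathTime x = t)} with hT
  have hTfin : T.Finite := by
    apply Set.Finite.subset ((hAfin.image d.deathTime).union (hAfin.image d'.deathTime))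
    rintro t ⟨x, hx, ⟨c, -, hc⟩ | ⟨c, -, hc⟩⟩
    · exact Or.inl ⟨x, hx, hc⟩
    · exact Or.inr ⟨x, hx, hc⟩
  have haA : a ∈ A := ⟨ha, hne0⟩
  have hTne : T.Nonempty := by
    rcases h1 : d.partner a with _ | c
    · rcases h2 : d'.partner a with _ | c
      · exact absurd (h1.trans h2.symm) hne0
      · exact ⟨d'.deathTime a, a, haA, Or.inr ⟨c, h2, rfl⟩⟩
    · exact ⟨d.deathTime a, a, haA, Or.inl ⟨c, h1, rfl⟩⟩
  have hTne' : hTfin.toFinset.Nonempty := by simpa using hTne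
  set t := hTfin.toFinset.min' hTne' with htdef
  have htT : t ∈ T := by
    have := hTfin.toFinset.min'_mem hTne'
    simpa using this
  have htmin : ∀ s ∈ T, t ≤ s := by
    intro s hs
    exact hTfin.toFinset.min'_le s (by simpa using hs)
  obtain ⟨x, hxA, hcase⟩ := htT
  rcases hcase with ⟨c, hxc, hxt⟩ | ⟨c, hxc, hxt⟩
  · -- death in d
    have hne' : d'.partner x ≠ some c := by
      rw [← hxc]; exact fun h => hxA.2 h.symm
    refine key hΔ hnt d d' hxA.1 hxc hne' ?_
    intro y hy hyA
    constructor
    · intro cc hcc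
      rw [hxt]
      exact htmin _ ⟨y, ⟨hy, hyA⟩, Or.inl ⟨cc, hcc, rfl⟩⟩
    · intro cc hcc
      rw [hxt]
      exact htmin _ ⟨y, ⟨hy, hyA⟩, Or.inr ⟨cc, hcc, rfl⟩⟩
  · -- death in d'
    have hne' : d.partner x ≠ some c := by
      rw [← hxc]; exact hxA.2
    refine key hΔ hnt d' d hxA.1 hxc hne' ?_
    intro y hy hyA
    constructor
    · intro cc hcc
      rw [hxt]
      exact htmin _ ⟨y, ⟨hy, Ne.symm hyA⟩, Or.inr ⟨cc, hcc, rfl⟩⟩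
    · intro cc hcc
      rw [hxt]
      exact htmin _ ⟨y, ⟨hy, Ne.symm hyA⟩, Or.inl ⟨cc, hcc, rfl⟩⟩

def Closed (d : Dynamics v Δ Set.univ) (n : ℕ) : Prop :=
  ∀ i, i ≤ n → ∀ j, d.partner i = some j → j ≤ n

def restrictIic (d : Dynamics v Δ Set.univ) {n : ℕ} (h : d.Closed n) :
    Dynamics v Δ (Set.Iic n) where
  partner := d.partner
  deathTime := d.deathTime
  partner_mem := fun i j hi hij => h i hi j hij
  partner_symm := fun i j _ _ => d.partner_symm i j trivial trivial
  partner_ne := fun i _ => d.partner_ne i trivial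
  death_symm := fun i j _ => d.death_symm i j trivial
  collide := fun i j _ => d.collide i j trivial
  no_crossing := fun i j _ _ => d.no_crossing i j trivial trivial

lemma exists_closed (hv : ∀ i, 0 < v i) (hΔ : ∀ i, 0 < Δ i) (hnt : NoTriple v Δ)
    (d : Dynamics v Δ Set.univ) (n0 : ℕ) : ∃ n, n0 ≤ n ∧ d.Closed n := by
  classical
  set g : ℕ → ℕ := fun i => (d.partner i).getD 0 with hg
  set s : Finset ℕ := Finset.range (n0 + 1) with hs
  set N := max n0 (s.sup g) with hN
  refine ⟨N, le_max_left _ _, ?_⟩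
  have hgle : ∀ i, i ≤ n0 → ∀ j, d.partner i = some j → j ≤ N := by
    intro i hi j hij
    have h1 : g i = j := by simp [hg, hij]
    have h2 : g i ≤ s.sup g := Finset.le_sup (by simp [hs]; omega)
    omega
  intro k hk j hkj
  by_cases hk0 : k ≤ n0
  · exact hgle k hk0 j hkj
  push_neg at hk0
  have hsupN : N = s.sup g := by
    rcases max_cases n0 (s.sup g) with ⟨h, h'⟩ | ⟨h, h'⟩
    · omega
    · exact h
  obtain ⟨i, hi, hisup⟩ := Finset.exists_mem_eq_sup s ⟨0, by simp [hs]⟩ g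
  have hin0 : i ≤ n0 := by
    have : i < n0 + 1 := by simpa [hs] using hi
    omega
  rcases hpi : d.partner i with _ | jN
  · exfalso
    have : g i = 0 := by simp [hg, hpi]
    omega
  have hjN : jN = N := by
    have : g i = jN := by simp [hg, hpi]
    omega
  subst hjN
  have hiN : i < N := by omega
  by_cases hkN : k = N
  · have hsym : d.partner N = some i := (d.partner_symm i N trivial trivial).mp hpi
    rw [hkN] at hkj
    rw [hkj] at hsym
    have : j = i := by injection hsym
    omega
  · have hkltN : k < N := lt_of_le_of_ne hk hkN
    have hik : i < k := by omega
    by_contra hjN'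
    push_neg at hjN'
    exact d.no_cross hv hΔ hnt trivial trivial hik hkltN hjN' hpi hkj

end Dynamics

end Aux


/-- If the full survivor set `S` is finite, then almost surely `S_n = S` for infinitely
many `n`; consequently `liminf_n |S_n| ≤ |S|` on the event that `S` is finite. -/
theorem truncS_eq_surv_frequently (B : Setup Ω P μ ν) (hvalid : B.valid) :
    ∀ᵐ ω ∂P, (B.survSet ω).Finite →
      (∃ᶠ n in Filter.atTop, B.truncS ω n = B.survSet ω) ∧
        Filter.liminf (fun n => (B.truncS ω n).encard) Filter.atTop ≤
          (B.survSet ω).encard := by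
  filter_upwards [hvalid] with ω hnt hfin
  have hv : ∀ i, 0 < B.vseq ω i := fun i => B.Vpos i ω
  have hΔ : ∀ i, 0 < B.dseq ω i := fun i => B.Dpos i ω
  obtain ⟨m, hm⟩ : ∃ m, ∀ s ∈ B.survSet ω, s ≤ m := by
    obtain ⟨m, hm⟩ := hfin.bddAbove
    exact ⟨m, fun s hs => hm hs⟩
  have hfreq : ∃ᶠ n in Filter.atTop, B.truncS ω n = B.survSet ω := by
    rw [Filter.frequently_atTop]
    intro n0
    obtain ⟨n, hn, hcl⟩ :=
      Dynamics.exists_closed hv hΔ hnt (B.dynOn ω Set.univ) (max n0 m)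
    refine ⟨n, le_trans (le_max_left _ _) hn, ?_⟩
    have hSub : B.survSet ω ⊆ Set.Iic n := fun s hs =>
      le_trans (le_trans (hm s hs) (le_max_right n0 m)) hn
    have hpe : ∀ a, a ∈ Set.Iic n →
        (B.dynOn ω (Set.Iic n)).partner a = (B.dynOn ω Set.univ).partner a := by
      intro a ha
      have := Dynamics.partner_eq_of_finite hΔ hnt (Set.finite_Iic n)
        (B.dynOn ω (Set.Iic n)) ((B.dynOn ω Set.univ).restrictIic hcl) ha
      simpa [Dynamics.restrictIic] using this
    ext i
    constructor
    · rintro ⟨hi, hsurv⟩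
      refine ⟨trivial, ?_⟩
      rw [Dynamics.survives, ← hpe i hi]
      exact hsurv
    · rintro ⟨-, hsurv⟩
      have hi : i ∈ Set.Iic n := hSub ⟨trivial, hsurv⟩
      refine ⟨hi, ?_⟩
      rw [Dynamics.survives, hpe i hi]
      exact hsurv
  refine ⟨hfreq, ?_⟩
  exact Filter.liminf_le_of_frequently_le'
    (hfreq.mono fun n hn => le_of_eq (by rw [hn]))

end BulletProcess
end
end
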